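/- Let α_q, β_q, α_p, β_p > 0 and let q be the Gamma distribution with shape α_q and rate β_q and p the Gamma distribution with shape α_p and rate β_p. Then the Kullback–Leibler divergence D_KL(q ‖ p) equals (α_q − α_p)·ψ(α_q) − log(Γ(α_q)) + log(Γ(α_p)) + α_p·(log(β_q) − log(β_p)) + α_q·(β_p − β_q)/β_q, where ψ = Γ'/Γ is the digamma function. -/

import Mathlib

open MeasureTheory ProbabilityTheory

/-- The Kullback–Leibler divergence `D_KL(q ‖ p) = ∫ log(dq/dp) dq` of `q` from `p`
(meaningful when `q` is absolutely continuous with respect to `p`). -/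
noncomputable def klDivergence (q p : Measure ℝ) : ℝ :=
  ∫ x, Real.log ((q.rnDeriv p) x).toReal ∂q

/-- The digamma function `ψ = Γ'/Γ`. -/
noncomputable def digamma (x : ℝ) : ℝ := deriv Real.Gamma x / Real.Gamma x

section Aux
open Real Set Filter Topology
open scoped ENNReal NNReal


lemma J0 {a r : ℝ} (ha : 0 < a) (hr : 0 < r) :
    IntegrableOn (fun x : ℝ => x ^ (a - 1) * Real.exp (-(r * x))) (Ioi 0) := by
  have h := integrableOn_rpow_mul_exp_neg_mul_rpow (p := 1) (s := a - 1) (b := r)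
    (by linarith) zero_lt_one hr
  refine h.congr_fun (fun x hx => ?_) measurableSet_Ioi
  dsimp only; rw [Real.rpow_one, neg_mul]

lemma J1 {a r : ℝ} (ha : 0 < a) (hr : 0 < r) :
    IntegrableOn (fun x : ℝ => x ^ (a - 1) * Real.log x * Real.exp (-(r * x))) (Ioi 0) := by
  have hmeas : AEStronglyMeasurable (fun x : ℝ => x ^ (a - 1) * Real.log x * Real.exp (-(r * x)))
      (volume.restrict (Ioi 0)) := by
    have m1 : Measurable fun x:ℝ => x ^ (a-1) * Real.log x := by measurability
    exact (m1.mul ((measurable_const.mul measurable_id).neg.exp)).aestronglyMeasurable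
  have hbound : IntegrableOn
      (fun x : ℝ => (2 / a) * (x ^ (a / 2 - 1) * Real.exp (-(r * x)))
        + x ^ (a + 1 - 1) * Real.exp (-(r * x))) (Ioi 0) :=
    ((J0 (by linarith) hr).const_mul _).add (J0 (by linarith) hr)
  refine Integrable.mono' hbound hmeas ?_
  rw [ae_restrict_iff' measurableSet_Ioi]
  filter_upwards with x hx
  simp only [mem_Ioi] at hx
  have hexp : 0 < Real.exp (-(r * x)) := Real.exp_pos _
  have hx1 : (0:ℝ) < x ^ (a - 1) := Real.rpow_pos_of_pos hx _
  rw [norm_mul, norm_mul, Real.norm_eq_abs, Real.norm_eq_abs, Real.norm_eq_abs,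
    abs_of_pos hx1, abs_of_pos hexp]
  rcases le_or_gt x 1 with hle | hgt
  · have hlog : |Real.log x| ≤ (2 / a) * x ^ (-(a/2)) := by
      rw [abs_of_nonpos (Real.log_nonpos hx.le hle)]
      have h1 : Real.log (x ^ (-(a/2))) ≤ x ^ (-(a/2)) := by
        have := Real.log_le_sub_one_of_pos (Real.rpow_pos_of_pos hx (-(a/2)))
        linarith
      rw [Real.log_rpow hx] at h1
      have ha2 : (0:ℝ) < a / 2 := by linarith
      calc -Real.log x = (2/a) * (-(a/2) * Real.log x) := by field_simp
        _ ≤ (2/a) * x ^ (-(a/2)) := by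
            apply mul_le_mul_of_nonneg_left h1 (by positivity)
    have htrans : x ^ (a - 1) * |Real.log x| * Real.exp (-(r * x))
        ≤ (2/a) * (x ^ (a - 1) * x ^ (-(a/2))) * Real.exp (-(r*x)) := by
      apply mul_le_mul_of_nonneg_right _ hexp.le
      calc x ^ (a-1) * |Real.log x| ≤ x ^ (a-1) * ((2/a) * x ^ (-(a/2))) :=
            mul_le_mul_of_nonneg_left hlog hx1.le
        _ = (2/a) * (x ^ (a-1) * x ^ (-(a/2))) := by ring
    refine htrans.trans ?_
    rw [← Real.rpow_add hx]
    have h2 : (0:ℝ) ≤ x ^ (a + 1 - 1) * Real.exp (-(r * x)) := by positivity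
    have h3 : x ^ (a - 1 + -(a/2)) = x ^ (a/2 - 1) := by ring_nf
    rw [h3]
    nlinarith [mul_nonneg (Real.rpow_pos_of_pos hx (a/2-1)).le hexp.le]
  · have hlog : |Real.log x| ≤ x := by
      rw [abs_of_nonneg (Real.log_nonneg hgt.le)]
      exact (Real.log_le_sub_one_of_pos hx).trans (by linarith)
    have htrans : x ^ (a - 1) * |Real.log x| * Real.exp (-(r * x))
        ≤ x ^ (a + 1 - 1) * Real.exp (-(r*x)) := by
      apply mul_le_mul_of_nonneg_right _ hexp.le
      calc x ^ (a-1) * |Real.log x| ≤ x ^ (a-1) * x ^ (1:ℝ) := by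
            rw [Real.rpow_one]; exact mul_le_mul_of_nonneg_left hlog hx1.le
        _ = x ^ (a + 1 - 1) := by rw [← Real.rpow_add hx]; ring_nf
    refine htrans.trans ?_
    have : (0:ℝ) ≤ (2 / a) * (x ^ (a / 2 - 1) * Real.exp (-(r * x))) := by positivity
    linarith

lemma gamma_deriv_integral {a : ℝ} (ha : 0 < a) :
    deriv Real.Gamma a = ∫ t in Ioi (0:ℝ), t ^ (a - 1) * Real.log t * Real.exp (-t) := by
  have hc : HasDerivAt Complex.GammaIntegral
      (∫ t : ℝ in Ioi 0, (t:ℂ) ^ ((a:ℂ) - 1) * (Real.log t * Real.exp (-t))) a :=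
    Complex.hasDerivAt_GammaIntegral (by simpa using ha)
  have heq : ((∫ t in Ioi (0:ℝ), t ^ (a - 1) * Real.log t * Real.exp (-t) : ℝ) : ℂ)
      = (∫ t : ℝ in Ioi 0, (t:ℂ) ^ ((a:ℂ) - 1) * (Real.log t * Real.exp (-t))) := by
    have h0 : ((∫ t in Ioi (0:ℝ), t ^ (a - 1) * Real.log t * Real.exp (-t) : ℝ) : ℂ)
        = ∫ t in Ioi (0:ℝ), ((t ^ (a - 1) * Real.log t * Real.exp (-t) : ℝ) : ℂ) :=
      integral_ofReal.symm
    rw [h0]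
    refine setIntegral_congr_fun measurableSet_Ioi (fun t ht => ?_)
    rw [Complex.ofReal_mul, Complex.ofReal_mul,
      Complex.ofReal_cpow (le_of_lt (show (0:ℝ) < t from ht)), Complex.ofReal_sub,
      Complex.ofReal_one]
    ring
  rw [← heq] at hc
  have hG : HasDerivAt Complex.Gamma
      ((∫ t in Ioi (0:ℝ), t ^ (a - 1) * Real.log t * Real.exp (-t) : ℝ) : ℂ) a := by
    refine hc.congr_of_eventuallyEq ?_
    have hopen : IsOpen {z : ℂ | 0 < z.re} := isOpen_lt continuous_const Complex.continuous_re
    filter_upwards [hopen.mem_nhds (by simpa using ha : (a:ℂ) ∈ {z : ℂ | 0 < z.re})] with z hz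
    exact (Complex.Gamma_eq_integral hz)
  have hR := hG.real_of_complex
  have : (fun x : ℝ => (Complex.Gamma x).re) = Real.Gamma := by
    ext x
    rw [Complex.Gamma_ofReal, Complex.ofReal_re]
  rw [this] at hR
  simpa using hR.deriv

lemma A1_eval {a r : ℝ} (ha : 0 < a) (hr : 0 < r) :
    ∫ t in Ioi (0:ℝ), t ^ (a - 1) * Real.log t * Real.exp (-(r * t))
      = (1/r) ^ a * (deriv Real.Gamma a - Real.log r * Real.Gamma a) := by
  set g : ℝ → ℝ := fun u => (u/r) ^ (a-1) * Real.log (u/r) * Real.exp (-u) with hg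
  have hsub : ∀ x : ℝ, g (r * x) = x ^ (a-1) * Real.log x * Real.exp (-(r * x)) := by
    intro x
    simp only [hg, mul_div_cancel_left₀ _ hr.ne']
  have h1 : ∫ t in Ioi (0:ℝ), t ^ (a - 1) * Real.log t * Real.exp (-(r * t))
      = r⁻¹ * ∫ u in Ioi (0:ℝ), g u := by
    have h0 := integral_comp_mul_left_Ioi g 0 hr
    rw [mul_zero, smul_eq_mul] at h0
    rw [← h0]
    exact (setIntegral_congr_fun measurableSet_Ioi (fun x _ => (hsub x).symm))
  have h2 : ∫ u in Ioi (0:ℝ), g u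
      = (r ^ (a-1))⁻¹ * (∫ u in Ioi (0:ℝ), u ^ (a-1) * Real.log u * Real.exp (-u))
        - (r ^ (a-1))⁻¹ * Real.log r * (∫ u in Ioi (0:ℝ), u ^ (a-1) * Real.exp (-u)) := by
    have hJ1 : IntegrableOn (fun u : ℝ => u ^ (a-1) * Real.log u * Real.exp (-u)) (Ioi 0) := by
      have := J1 ha one_pos
      simpa using this
    have hJ0 : IntegrableOn (fun u : ℝ => u ^ (a-1) * Real.exp (-u)) (Ioi 0) := by
      have := J0 ha one_pos
      simpa using this
    rw [← integral_const_mul ((r ^ (a-1))⁻¹), ← integral_const_mul ((r ^ (a-1))⁻¹ * Real.log r),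
      ← integral_sub (hJ1.const_mul _) (hJ0.const_mul _)]
    refine setIntegral_congr_fun measurableSet_Ioi (fun u hu => ?_)
    have hu' : (0:ℝ) < u := hu
    simp only [hg]
    rw [Real.div_rpow hu'.le hr.le, Real.log_div hu'.ne' hr.ne']
    rw [div_eq_mul_inv]
    ring
  have h3 : (∫ u in Ioi (0:ℝ), u ^ (a-1) * Real.exp (-u)) = Real.Gamma a := by
    rw [Real.Gamma_eq_integral ha]
    exact setIntegral_congr_fun measurableSet_Ioi (fun u hu => mul_comm _ _)
  have h4 : (1/r) ^ a = r⁻¹ * (r ^ (a-1))⁻¹ := by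
    rw [one_div, Real.inv_rpow hr.le, ← Real.rpow_neg hr.le, ← Real.rpow_neg hr.le,
      ← Real.rpow_neg_one r, ← Real.rpow_add hr]
    congr 1
    ring
  rw [h1, h2, h3, gamma_deriv_integral ha, h4]
  ring


lemma measurable_gammaPDF (a r : ℝ) : Measurable (gammaPDF a r) :=
  (measurable_gammaPDFReal a r).ennreal_ofReal

lemma gamma_eq_withDensity (αq βq αp βp : ℝ)
    (hαq : 0 < αq) (hβq : 0 < βq) (hαp : 0 < αp) (hβp : 0 < βp) :
    gammaMeasure αq βq = (gammaMeasure αp βp).withDensity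
      (fun x => gammaPDF αq βq x / gammaPDF αp βp x) := by
  rw [gammaMeasure, gammaMeasure, ← withDensity_mul _ (g := fun x => gammaPDF αq βq x / gammaPDF αp βp x) (measurable_gammaPDF αp βp)
    ((measurable_gammaPDF αq βq).div (measurable_gammaPDF αp βp))]
  refine withDensity_congr_ae ?_
  have h0 : ∀ᵐ x : ℝ ∂volume, x ≠ 0 := by
    rw [ae_iff]
    simpa using measure_singleton (0:ℝ)
  filter_upwards [h0] with x hx
  rcases lt_or_gt_of_ne hx with hneg | hpos
  · simp [gammaPDF_of_neg hneg]
  · have hp : gammaPDF αp βp x ≠ 0 := by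
      rw [gammaPDF_of_nonneg hpos.le]
      simp only [ne_eq, ENNReal.ofReal_eq_zero, not_le]
      have := gammaPDFReal_pos hαp hβp hpos
      rw [gammaPDFReal, if_pos hpos.le] at this
      exact this
    simp only [Pi.mul_apply]
    exact (ENNReal.mul_div_cancel hp ENNReal.ofReal_ne_top).symm

lemma gamma_rnDeriv (αq βq αp βp : ℝ)
    (hαq : 0 < αq) (hβq : 0 < βq) (hαp : 0 < αp) (hβp : 0 < βp) :
    (gammaMeasure αq βq).rnDeriv (gammaMeasure αp βp)
      =ᵐ[gammaMeasure αq βq] (fun x => gammaPDF αq βq x / gammaPDF αp βp x) := by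
  have : IsProbabilityMeasure (gammaMeasure αp βp) := isProbabilityMeasure_gammaMeasure hαp hβp
  have h := Measure.rnDeriv_withDensity (gammaMeasure αp βp) (f := fun x => gammaPDF αq βq x / gammaPDF αp βp x)
    ((measurable_gammaPDF αq βq).div (measurable_gammaPDF αp βp))
  rw [← gamma_eq_withDensity αq βq αp βp hαq hβq hαp hβp] at h
  have hac : gammaMeasure αq βq ≪ gammaMeasure αp βp := by
    rw [gamma_eq_withDensity αq βq αp βp hαq hβq hαp hβp]
    exact withDensity_absolutelyContinuous _ _
  exact h.filter_mono hac.ae_le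

lemma gamma_ae_pos (a r : ℝ) : ∀ᵐ x : ℝ ∂(gammaMeasure a r), 0 < x := by
  rw [ae_iff]
  have : {x : ℝ | ¬ 0 < x} = Iic 0 := by ext x; simp
  rw [this, gammaMeasure, withDensity_apply _ measurableSet_Iic,
    ← setLIntegral_congr (Iio_ae_eq_Iic (a := (0:ℝ)))]
  exact lintegral_gammaPDF_of_nonpos le_rfl

lemma integral_gammaMeasure {a r : ℝ} (ha : 0 < a) (hr : 0 < r) (F : ℝ → ℝ) :
    ∫ x, F x ∂(gammaMeasure a r) = ∫ x in Ioi (0:ℝ), gammaPDFReal a r x * F x := by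
  have hm : Measurable fun x => (gammaPDFReal a r x).toNNReal :=
    (measurable_gammaPDFReal a r).real_toNNReal
  have h1 : gammaMeasure a r
      = volume.withDensity (fun x => ((gammaPDFReal a r x).toNNReal : ℝ≥0∞)) := rfl
  rw [h1, integral_withDensity_eq_integral_smul hm]
  have h2 : ∀ᵐ x : ℝ ∂volume, x ∉ Ioi (0:ℝ) → (gammaPDFReal a r x).toNNReal • F x = 0 := by
    have h0 : ∀ᵐ x : ℝ ∂volume, x ≠ 0 := by
      rw [ae_iff]; simpa using measure_singleton (0:ℝ)
    filter_upwards [h0] with x hx hxn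
    have hneg : x < 0 := lt_of_le_of_ne (by simpa using hxn) hx
    rw [gammaPDFReal, if_neg (not_le.mpr hneg)]
    simp
  rw [← setIntegral_eq_integral_of_ae_compl_eq_zero h2]
  refine setIntegral_congr_fun measurableSet_Ioi (fun x hx => ?_)
  rw [NNReal.smul_def, Real.coe_toNNReal _ (gammaPDFReal_nonneg ha hr x), smul_eq_mul]


theorem kl_gamma_gamma (αq βq αp βp : ℝ)
    (hαq : 0 < αq) (hβq : 0 < βq) (hαp : 0 < αp) (hβp : 0 < βp) :
    klDivergence (gammaMeasure αq βq) (gammaMeasure αp βp) =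
      (αq - αp) * digamma αq - Real.log (Real.Gamma αq) + Real.log (Real.Gamma αp)
        + αp * (Real.log βq - Real.log βp) + αq * (βp - βq) / βq := by
  have hΓq : 0 < Real.Gamma αq := Real.Gamma_pos_of_pos hαq
  have hΓp : 0 < Real.Gamma αp := Real.Gamma_pos_of_pos hαp
  set cq : ℝ := βq ^ αq / Real.Gamma αq with hcq
  set cp : ℝ := βp ^ αp / Real.Gamma αp with hcp
  have hcq0 : 0 < cq := by rw [hcq]; positivity
  have hcp0 : 0 < cp := by rw [hcp]; positivity
  set K : ℝ := Real.log cq - Real.log cp with hK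
  set F : ℝ → ℝ := fun x => K + (αq - αp) * Real.log x + (βp - βq) * x with hF
  have h_ae : ∀ᵐ x ∂(gammaMeasure αq βq),
      Real.log (((gammaMeasure αq βq).rnDeriv (gammaMeasure αp βp) x).toReal) = F x := by
    filter_upwards [gamma_rnDeriv αq βq αp βp hαq hβq hαp hβp, gamma_ae_pos αq βq]
      with x hrn hx
    rw [hrn]
    rw [gammaPDF_of_nonneg hx.le, gammaPDF_of_nonneg hx.le, ENNReal.toReal_div,
      ENNReal.toReal_ofReal (by positivity), ENNReal.toReal_ofReal (by positivity)]
    have hxq : (0:ℝ) < x ^ (αq - 1) := Real.rpow_pos_of_pos hx _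
    have hxp : (0:ℝ) < x ^ (αp - 1) := Real.rpow_pos_of_pos hx _
    rw [Real.log_div (by positivity) (by positivity),
      Real.log_mul (by positivity) (Real.exp_ne_zero _),
      Real.log_mul (by positivity) hxq.ne',
      Real.log_mul (by positivity) (Real.exp_ne_zero _),
      Real.log_mul (by positivity) hxp.ne',
      Real.log_rpow hx, Real.log_rpow hx, Real.log_exp, Real.log_exp]
    simp only [hF, hK, hcq, hcp]
    ring
  rw [klDivergence, integral_congr_ae h_ae, integral_gammaMeasure hαq hβq F]
  have hsplit : ∫ x in Ioi (0:ℝ), gammaPDFReal αq βq x * F x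
      = ((K * cq) * ∫ x in Ioi (0:ℝ), x ^ (αq - 1) * Real.exp (-(βq * x)))
        + (((αq - αp) * cq) * ∫ x in Ioi (0:ℝ), x ^ (αq - 1) * Real.log x
            * Real.exp (-(βq * x)))
        + (((βp - βq) * cq) * ∫ x in Ioi (0:ℝ), x ^ (αq + 1 - 1) * Real.exp (-(βq * x))) := by
    have i1 : Integrable (fun a : ℝ => K * cq * (a ^ (αq - 1) * Real.exp (-(βq * a))))
        (volume.restrict (Ioi 0)) := (J0 hαq hβq).const_mul _
    have i2 : Integrable (fun a : ℝ => (αq - αp) * cq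
        * (a ^ (αq - 1) * Real.log a * Real.exp (-(βq * a))))
        (volume.restrict (Ioi 0)) := (J1 hαq hβq).const_mul _
    have i3 : Integrable (fun a : ℝ => (βp - βq) * cq
        * (a ^ (αq + 1 - 1) * Real.exp (-(βq * a))))
        (volume.restrict (Ioi 0)) := (J0 (by linarith : (0:ℝ) < αq + 1) hβq).const_mul _
    have i12 : Integrable (fun a : ℝ => K * cq * (a ^ (αq - 1) * Real.exp (-(βq * a)))
        + (αq - αp) * cq * (a ^ (αq - 1) * Real.log a * Real.exp (-(βq * a))))
        (volume.restrict (Ioi 0)) := i1.add i2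
    rw [← integral_const_mul, ← integral_const_mul, ← integral_const_mul,
      ← integral_add i1 i2, ← integral_add i12 i3]
    refine setIntegral_congr_fun measurableSet_Ioi (fun x hx => ?_)
    have hx' : (0:ℝ) < x := hx
    rw [gammaPDFReal, if_pos hx'.le]
    simp only [hF, Pi.add_apply]
    rw [show αq + 1 - 1 = (αq - 1) + 1 by ring, Real.rpow_add hx', Real.rpow_one]
    ring
  rw [hsplit, integral_rpow_mul_exp_neg_mul_Ioi hαq hβq, A1_eval hαq hβq,
    integral_rpow_mul_exp_neg_mul_Ioi (by linarith : (0:ℝ) < αq + 1) hβq]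
  have hE : (1/βq) ^ αq = (βq ^ αq)⁻¹ := by
    rw [one_div]; exact Real.inv_rpow hβq.le αq
  have hE2 : (1/βq) ^ (αq + 1) = (βq ^ αq)⁻¹ * βq⁻¹ := by
    rw [Real.rpow_add (by positivity), Real.rpow_one, hE, one_div]
  have hΓ1 : Real.Gamma (αq + 1) = αq * Real.Gamma αq := Real.Gamma_add_one hαq.ne'
  have hKval : K = αq * Real.log βq - Real.log (Real.Gamma αq)
      - (αp * Real.log βp - Real.log (Real.Gamma αp)) := by
    rw [hK, hcq, hcp, Real.log_div (by positivity) hΓq.ne',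
      Real.log_div (by positivity) hΓp.ne', Real.log_rpow hβq, Real.log_rpow hβp]
  rw [hE, hE2, hΓ1, hKval, hcq, digamma]
  have hβqa : (0:ℝ) < βq ^ αq := Real.rpow_pos_of_pos hβq _
  field_simp
  ring

end Aux
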